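/- Let Q be an upper triangular n×n real matrix. Consider the reduced MILP in which, for each pair i < j, only the constraints x_i + x_j − z_{ij} ≤ 1 and z_{ij} ≥ 0 are imposed when Q_{ij} > 0, only the constraints z_{ij} ≤ x_i and z_{ij} ≤ x_j are imposed when Q_{ij} < 0, and no constraints are imposed on z_{ij} when Q_{ij} = 0 except that it is fixed to 0. The optimal value of this reduced MILP (minimizing ∑_{i<j} Q_{ij} z_{ij} + ∑_i Q_{ii} x_i over x ∈ {0,1}^n and z real) equals the minimum of x^T Q x over x ∈ {0,1}^n. -/

import Mathlib

open Finset Matrix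

lemma quad_eq {n : ℕ} (Q : Matrix (Fin n) (Fin n) ℝ)
    (hQ : ∀ i j : Fin n, j < i → Q i j = 0) (x : Fin n → ℝ)
    (hx : ∀ i, x i = 0 ∨ x i = 1) :
    x ⬝ᵥ Q.mulVec x =
      (∑ i, ∑ j ∈ univ.filter (fun j => i < j), Q i j * (x i * x j)) +
        ∑ i, Q i i * x i := by
  have key : ∀ i, ∑ j, x i * (Q i j * x j) =
      (∑ j ∈ univ.filter (fun j => i < j), Q i j * (x i * x j)) + Q i i * x i := by
    intro i
    rw [← Finset.sum_filter_add_sum_filter_not univ (fun j => i < j)]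
    congr 1
    · exact Finset.sum_congr rfl fun j _ => by ring
    · rw [Finset.sum_eq_single i]
      · have : x i * x i = x i := by rcases hx i with h | h <;> simp [h]
        calc x i * (Q i i * x i) = Q i i * (x i * x i) := by ring
        _ = Q i i * x i := by rw [this]
      · intro j hj hne
        have : j < i := by
          simp only [Finset.mem_filter, not_lt] at hj
          exact lt_of_le_of_ne hj.2 hne
        simp [hQ i j this]
      · intro h
        exact absurd (by simp) h
  simp only [dotProduct, mulVec, dotProduct, Finset.mul_sum]
  rw [← Finset.sum_add_distrib]
  exact Finset.sum_congr rfl fun i _ => key i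

/-- Let `Q` be an upper triangular n×n real matrix. In the reduced
MILP, for each pair `i < j`, only `x_i + x_j − z_{ij} ≤ 1` and `z_{ij} ≥ 0` are
imposed when `Q_{ij} > 0`, only `z_{ij} ≤ x_i` and `z_{ij} ≤ x_j` are imposed
when `Q_{ij} < 0`, and `z_{ij}` is fixed to `0` when `Q_{ij} = 0`. The optimal
value of this reduced MILP equals the minimum of `xᵀ Q x` over `x ∈ {0,1}ⁿ`. -/
theorem stmt_8 (n : ℕ) (Q : Matrix (Fin n) (Fin n) ℝ)
    (hQ : ∀ i j : Fin n, j < i → Q i j = 0) :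
    sInf {v : ℝ | ∃ (x : Fin n → ℝ) (z : Fin n → Fin n → ℝ),
        (∀ i, x i = 0 ∨ x i = 1) ∧
        (∀ i j : Fin n, i < j →
          (0 < Q i j → x i + x j - z i j ≤ 1 ∧ 0 ≤ z i j) ∧
          (Q i j < 0 → z i j ≤ x i ∧ z i j ≤ x j) ∧
          (Q i j = 0 → z i j = 0)) ∧
        v = (∑ i, ∑ j ∈ univ.filter (fun j => i < j), Q i j * z i j) +
          ∑ i, Q i i * x i} =
      sInf {v : ℝ | ∃ x : Fin n → ℝ, (∀ i, x i = 0 ∨ x i = 1) ∧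
        v = x ⬝ᵥ Q.mulVec x} := by
  set A := {v : ℝ | ∃ (x : Fin n → ℝ) (z : Fin n → Fin n → ℝ),
        (∀ i, x i = 0 ∨ x i = 1) ∧
        (∀ i j : Fin n, i < j →
          (0 < Q i j → x i + x j - z i j ≤ 1 ∧ 0 ≤ z i j) ∧
          (Q i j < 0 → z i j ≤ x i ∧ z i j ≤ x j) ∧
          (Q i j = 0 → z i j = 0)) ∧
        v = (∑ i, ∑ j ∈ univ.filter (fun j => i < j), Q i j * z i j) +
          ∑ i, Q i i * x i} with hA
  set B := {v : ℝ | ∃ x : Fin n → ℝ, (∀ i, x i = 0 ∨ x i = 1) ∧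
        v = x ⬝ᵥ Q.mulVec x} with hB
  -- B is finite
  have hBfin : B.Finite := by
    have : B ⊆ (fun x : Fin n → ℝ => x ⬝ᵥ Q.mulVec x) ''
        (Set.pi Set.univ fun _ : Fin n => ({0, 1} : Set ℝ)) := by
      rintro v ⟨x, hx, rfl⟩
      exact ⟨x, fun i _ => by rcases hx i with h | h <;> simp [h], rfl⟩
    have hpi : (Set.pi Set.univ fun _ : Fin n => ({0, 1} : Set ℝ)).Finite :=
      Set.Finite.pi fun _ => (Set.finite_singleton (1:ℝ)).insert 0
    exact Set.Finite.subset (hpi.image _) this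
  have hBne : B.Nonempty := ⟨(0 : Fin n → ℝ) ⬝ᵥ Q.mulVec 0, 0, fun i => Or.inl rfl, rfl⟩
  -- B ⊆ A
  have hBA : B ⊆ A := by
    rintro v ⟨x, hx, rfl⟩
    refine ⟨x, fun i j => if Q i j = 0 then 0 else x i * x j, hx, ?_, ?_⟩
    · intro i j hij
      dsimp only
      refine ⟨fun hpos => ?_, fun hneg => ?_, fun h0 => by simp [h0]⟩
      · rw [if_neg hpos.ne']
        rcases hx i with h | h <;> rcases hx j with h' | h' <;> rw [h, h'] <;>
          constructor <;> norm_num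
      · rw [if_neg hneg.ne]
        rcases hx i with h | h <;> rcases hx j with h' | h' <;> rw [h, h'] <;>
          constructor <;> norm_num
    · rw [quad_eq Q hQ x hx]
      congr 1
      refine Finset.sum_congr rfl fun i _ => Finset.sum_congr rfl fun j _ => ?_
      by_cases h : Q i j = 0 <;> simp [h]
  -- every element of A dominates an element of B
  have hdom : ∀ v ∈ A, ∃ w ∈ B, w ≤ v := by
    rintro v ⟨x, z, hx, hcon, rfl⟩
    refine ⟨x ⬝ᵥ Q.mulVec x, ⟨x, hx, rfl⟩, ?_⟩
    rw [quad_eq Q hQ x hx]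
    apply add_le_add_left
    refine Finset.sum_le_sum fun i _ => Finset.sum_le_sum fun j hj => ?_
    simp only [Finset.mem_filter] at hj
    obtain ⟨h1, h2, h3⟩ := hcon i j hj.2
    rcases lt_trichotomy (Q i j) 0 with hq | hq | hq
    · obtain ⟨hz1, hz2⟩ := h2 hq
      have : z i j ≤ x i * x j := by
        rcases hx i with h | h <;> rcases hx j with h' | h' <;>
          rw [h] at hz1 ⊢ <;> rw [h'] at hz2 ⊢ <;> nlinarith
      nlinarith
    · simp [hq]
    · obtain ⟨hz1, hz2⟩ := h1 hq
      have : x i * x j ≤ z i j := by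
        rcases hx i with h | h <;> rcases hx j with h' | h' <;>
          rw [h, h'] at hz1 ⊢ <;> nlinarith
      nlinarith
  have hm : sInf B ∈ B := Set.Nonempty.csInf_mem hBne hBfin
  have hlbB : ∀ w ∈ B, sInf B ≤ w := fun w hw => csInf_le hBfin.bddBelow hw
  have hlbA : ∀ v ∈ A, sInf B ≤ v := by
    intro v hv
    obtain ⟨w, hwB, hwv⟩ := hdom v hv
    exact le_trans (hlbB w hwB) hwv
  have hAne : A.Nonempty := hBne.mono hBA
  exact le_antisymm (csInf_le ⟨sInf B, fun v hv => hlbA v hv⟩ (hBA hm)) (le_csInf hAne hlbA)
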